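/- If L is generic and k ≥ 2, then ∑_{m=1}^{k} (−1)^{m−1} f_{m−1} = 0, where f_{m−1} denotes the number of faces of Tonn^{n,k}(L) of cardinality m; that is, the Euler characteristic of the generalized Tonnetz Tonn^{n,k}(L) is 0. -/

import Mathlib

/-- The maximal simplex `Δ(x;σ)` of the generalized Tonnetz `Tonn^{n,k}(L)`. -/
def tonnDelta (n k : ℕ) (L : Fin k → ℕ) (x : ZMod n) (σ : Equiv.Perm (Fin k)) :
    Finset (ZMod n) :=
  Finset.image
    (fun j : Fin k =>
      x + ((∑ i ∈ Finset.univ.filter (· < j), L (σ i) : ℕ) : ZMod n))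
    Finset.univ

/-- A nonempty subset `S ⊆ ℤ/nℤ` is a face of `Tonn^{n,k}(L)` if `S ⊆ Δ(x;σ)`
for some `x` and `σ`. -/
def IsTonnFace (n k : ℕ) (L : Fin k → ℕ) (S : Finset (ZMod n)) : Prop :=
  S.Nonempty ∧ ∃ (x : ZMod n) (σ : Equiv.Perm (Fin k)), S ⊆ tonnDelta n k L x σ

/-- `L` is generic: equal subset sums force equal subsets. -/
def TonnGeneric (k : ℕ) (L : Fin k → ℕ) : Prop :=
  ∀ I J : Finset (Fin k), (∑ i ∈ I, L i) = (∑ j ∈ J, L j) → I = J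

open Finset

section Tonn

variable {n k : ℕ}

/-- prefix sums of `L ∘ σ` -/
def tpre (L : Fin k → ℕ) (σ : Equiv.Perm (Fin k)) (j : ℕ) : ℕ :=
  ∑ i ∈ Finset.univ.filter (fun i : Fin k => (i : ℕ) < j), L (σ i)

lemma tpre_zero (L : Fin k → ℕ) (σ : Equiv.Perm (Fin k)) : tpre L σ 0 = 0 := by
  simp [tpre]

lemma tpre_k (L : Fin k → ℕ) (σ : Equiv.Perm (Fin k)) : tpre L σ k = ∑ i, L i := by
  rw [tpre]
  rw [Finset.filter_true_of_mem (fun i _ => i.isLt)]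
  exact Equiv.sum_comp σ L

lemma tpre_succ (L : Fin k → ℕ) (σ : Equiv.Perm (Fin k)) {j : ℕ} (hj : j < k) :
    tpre L σ (j + 1) = tpre L σ j + L (σ ⟨j, hj⟩) := by
  rw [tpre, tpre]
  have : Finset.univ.filter (fun i : Fin k => (i : ℕ) < j + 1)
      = insert (⟨j, hj⟩ : Fin k) (Finset.univ.filter (fun i : Fin k => (i : ℕ) < j)) := by
    ext i
    simp only [mem_filter, mem_insert, mem_univ, true_and]
    constructor
    · intro h
      rcases Nat.lt_succ_iff_lt_or_eq.mp h with h | h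
      · exact Or.inr h
      · exact Or.inl (by ext; exact h)
    · rintro (rfl | h)
      · exact Nat.lt_succ_self j
      · exact Nat.lt_succ_of_lt h
  rw [this, Finset.sum_insert (by simp)]
  ring

lemma tpre_mono_le (L : Fin k → ℕ) (σ : Equiv.Perm (Fin k)) {j j' : ℕ} (h : j ≤ j') :
    tpre L σ j ≤ tpre L σ j' := by
  apply Finset.sum_le_sum_of_subset
  intro i hi
  simp only [mem_filter, mem_univ, true_and] at hi ⊢
  omega

lemma tpre_strict (L : Fin k → ℕ) (hL : ∀ i, 0 < L i) (σ : Equiv.Perm (Fin k)) {j j' : ℕ}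
    (h : j < j') (h' : j' ≤ k) : tpre L σ j < tpre L σ j' := by
  have hjk : j < k := lt_of_lt_of_le h h'
  calc tpre L σ j < tpre L σ (j+1) := by
        rw [tpre_succ L σ hjk]; have := hL (σ ⟨j, hjk⟩); omega
    _ ≤ tpre L σ j' := tpre_mono_le L σ h

lemma tonnDelta_eq (L : Fin k → ℕ) (x : ZMod n) (σ : Equiv.Perm (Fin k)) :
    tonnDelta n k L x σ
      = Finset.image (fun j : Fin k => x + ((tpre L σ j : ℕ) : ZMod n)) Finset.univ := rfl

end Tonn

section Dist

variable {n : ℕ}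

/-- circular distance from `p` to `q` -/
def tdist (p q : ZMod n) : ℕ := (q - p).val

lemma tdist_lt [NeZero n] (p q : ZMod n) : tdist p q < n := ZMod.val_lt _

lemma tdist_eq_zero_iff [NeZero n] {p q : ZMod n} : tdist p q = 0 ↔ p = q := by
  rw [tdist, ZMod.val_eq_zero, sub_eq_zero, eq_comm]

lemma add_tdist [NeZero n] (p q : ZMod n) : p + ((tdist p q : ℕ) : ZMod n) = q := by
  rw [tdist, ZMod.natCast_val, ZMod.cast_id]
  ring

lemma tdist_add_cast [NeZero n] (p : ZMod n) {c : ℕ} (hc : c < n) :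
    tdist p (p + (c : ZMod n)) = c := by
  rw [tdist, add_sub_cancel_left, ZMod.val_cast_of_lt hc]

end Dist

section Gap

variable {n : ℕ}

/-- the set of circular distances from `p` to other points of `S`, together with `n`. -/
def tgapset (S : Finset (ZMod n)) (p : ZMod n) : Finset ℕ :=
  insert n ((S.erase p).image (tdist p))

lemma tgapset_nonempty (S : Finset (ZMod n)) (p : ZMod n) : (tgapset S p).Nonempty :=
  Finset.insert_nonempty _ _

/-- the circular gap: distance from `p` to the nearest other point of `S` (or `n`). -/
def tgap (S : Finset (ZMod n)) (p : ZMod n) : ℕ :=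
  (tgapset S p).min' (tgapset_nonempty S p)

lemma tgap_le {S : Finset (ZMod n)} {p : ZMod n} {v : ℕ} (hv : v ∈ tgapset S p) :
    tgap S p ≤ v := Finset.min'_le _ _ hv

lemma tgap_le_n (S : Finset (ZMod n)) (p : ZMod n) : tgap S p ≤ n :=
  tgap_le (Finset.mem_insert_self _ _)

lemma tgap_le_dist {S : Finset (ZMod n)} {p q : ZMod n} (hq : q ∈ S) (hne : q ≠ p) :
    tgap S p ≤ tdist p q :=
  tgap_le (Finset.mem_insert_of_mem (Finset.mem_image_of_mem _ (Finset.mem_erase.mpr ⟨hne, hq⟩)))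

lemma tgap_mem (S : Finset (ZMod n)) (p : ZMod n) :
    tgap S p = n ∨ ∃ q ∈ S, q ≠ p ∧ tdist p q = tgap S p := by
  have h : tgap S p ∈ insert n ((S.erase p).image (tdist p)) :=
    Finset.min'_mem _ (tgapset_nonempty S p)
  rcases Finset.mem_insert.mp h with h | h
  · exact Or.inl h
  · right
    obtain ⟨q, hq, hq'⟩ := Finset.mem_image.mp h
    exact ⟨q, (Finset.mem_erase.mp hq).2, (Finset.mem_erase.mp hq).1, hq'⟩

lemma tgap_pos [NeZero n] (S : Finset (ZMod n)) (p : ZMod n) : 0 < tgap S p := by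
  rcases tgap_mem S p with h | ⟨q, _, hne, h⟩
  · rw [h]; exact Nat.pos_of_ne_zero (NeZero.ne n)
  · rw [← h]
    exact Nat.pos_of_ne_zero (fun h0 => hne (tdist_eq_zero_iff.mp h0).symm)

lemma ge_tgap_iff {S : Finset (ZMod n)} {p : ZMod n} {v : ℕ}
    (hn : v ≤ n) (hd : ∀ q ∈ S, q ≠ p → v ≤ tdist p q) : v ≤ tgap S p := by
  apply Finset.le_min'
  intro y hy
  have hy : y ∈ insert n ((S.erase p).image (tdist p)) := hy
  rcases Finset.mem_insert.mp hy with rfl | hy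
  · exact hn
  · obtain ⟨q, hq, rfl⟩ := Finset.mem_image.mp hy
    exact hd q (Finset.mem_erase.mp hq).2 (Finset.mem_erase.mp hq).1

end Gap

section Block

variable {n k : ℕ}

/-- the canonical block of indices associated to the gap at `p` -/
noncomputable def tblock (L : Fin k → ℕ) (S : Finset (ZMod n)) (p : ZMod n) :
    Finset (Fin k) :=
  if h : ∃ I : Finset (Fin k), (∑ i ∈ I, L i) = tgap S p then h.choose else ∅

lemma tblock_eq (L : Fin k → ℕ) (hgen : TonnGeneric k L) {S : Finset (ZMod n)} {p : ZMod n}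
    {I : Finset (Fin k)} (hI : (∑ i ∈ I, L i) = tgap S p) : tblock L S p = I := by
  rw [tblock, dif_pos ⟨I, hI⟩]
  exact hgen _ _ ((Exists.choose_spec (⟨I, hI⟩ : ∃ I : Finset (Fin k), (∑ i ∈ I, L i) = tgap S p)).trans hI.symm)

lemma tblock_sum (L : Fin k → ℕ) (hgen : TonnGeneric k L) {S : Finset (ZMod n)} {p : ZMod n}
    {I : Finset (Fin k)} (hI : (∑ i ∈ I, L i) = tgap S p) :
    (∑ i ∈ tblock L S p, L i) = tgap S p := by
  rw [tblock_eq L hgen hI]; exact hI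

end Block


section Rot

variable {n k : ℕ}

lemma tpre_rot [NeZero k] (L : Fin k → ℕ) (τ : Equiv.Perm (Fin k)) {j : ℕ} (hj : j < k) :
    L (τ 0) + tpre L ((Equiv.addRight (1 : Fin k)).trans τ) j = tpre L τ (j + 1) := by
  induction j with
  | zero =>
      rw [tpre_succ L τ (by omega : 0 < k), tpre_zero, tpre_zero, zero_add, add_zero]
      congr 2
  | succ j ih =>
      have hjk : j < k := by omega
      rw [tpre_succ _ _ hjk, tpre_succ L τ hj, ← ih hjk]
      have harg : ((Equiv.addRight (1 : Fin k)).trans τ) ⟨j, hjk⟩ = τ ⟨j + 1, hj⟩ := by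
        simp only [Equiv.trans_apply, Equiv.coe_addRight]
        congr 1
        ext
        rw [Fin.val_add]
        have h1 : (1 : Fin k).val = 1 := by
          rw [Fin.val_one']
          exact Nat.mod_eq_of_lt (by omega)
        simp only [h1]
        rw [Nat.mod_eq_of_lt hj]
      rw [harg, add_assoc]

lemma delta_rot_one [NeZero n] [NeZero k] (L : Fin k → ℕ) (hsum : ∑ i, L i = n)
    (x : ZMod n) (τ : Equiv.Perm (Fin k)) :
    tonnDelta n k L x τ
      = tonnDelta n k L (x + ((L (τ 0) : ℕ) : ZMod n)) ((Equiv.addRight (1 : Fin k)).trans τ) := by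
  have hk : 0 < k := Nat.pos_of_ne_zero (NeZero.ne k)
  rw [tonnDelta_eq, tonnDelta_eq]
  have key : ∀ (m : ℕ), m < k →
      x + ((L (τ 0) : ℕ) : ZMod n) + ((tpre L ((Equiv.addRight (1 : Fin k)).trans τ) m : ℕ) : ZMod n)
        = x + ((tpre L τ (m + 1) : ℕ) : ZMod n) := by
    intro m hm
    rw [add_assoc, ← Nat.cast_add, tpre_rot L τ hm]
  ext y
  simp only [Finset.mem_image, Finset.mem_univ, true_and]
  constructor
  · rintro ⟨u, rfl⟩
    by_cases hu : u.val = 0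
    · refine ⟨⟨k - 1, by omega⟩, ?_⟩
      refine (key (k - 1) (by omega)).trans ?_
      rw [Nat.sub_add_cancel (by omega : 1 ≤ k), tpre_k, hsum, ZMod.natCast_self, hu, tpre_zero,
        Nat.cast_zero]
    · refine ⟨⟨u.val - 1, by omega⟩, ?_⟩
      refine (key (u.val - 1) (by omega)).trans ?_
      rw [Nat.sub_add_cancel (by omega : 1 ≤ u.val)]
  · rintro ⟨t, rfl⟩
    by_cases ht : t.val + 1 = k
    · refine ⟨⟨0, hk⟩, ?_⟩
      refine Eq.trans ?_ (key t.val t.isLt).symm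
      rw [tpre_zero, ht, tpre_k, hsum, ZMod.natCast_self, Nat.cast_zero]
    · exact ⟨⟨t.val + 1, by omega⟩, (key t.val t.isLt).symm⟩

open Fin.NatCast in
lemma delta_rot [NeZero n] [NeZero k] (L : Fin k → ℕ) (hsum : ∑ i, L i = n)
    (x : ZMod n) (τ : Equiv.Perm (Fin k)) :
    ∀ j : ℕ, j ≤ k → ∃ τ' : Equiv.Perm (Fin k),
      (∀ i, τ' i = τ (i + (j : Fin k))) ∧
      tonnDelta n k L x τ = tonnDelta n k L (x + ((tpre L τ j : ℕ) : ZMod n)) τ' := by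
  intro j
  induction j with
  | zero =>
      intro _
      exact ⟨τ, by simp, by simp [tpre_zero]⟩
  | succ j ih =>
      intro hj
      obtain ⟨τ', hform, heq⟩ := ih (by omega)
      have hjk : j < k := by omega
      refine ⟨(Equiv.addRight (1 : Fin k)).trans τ', ?_, ?_⟩
      · intro i
        simp only [Equiv.trans_apply, Equiv.coe_addRight, hform]
        congr 1
        push_cast
        abel
      · rw [heq, delta_rot_one L hsum]
        congr 1
        rw [hform 0, zero_add]
        have hjcast : ((j : Fin k)) = (⟨j, hjk⟩ : Fin k) := by
          ext; simp [Fin.val_cast_of_lt hjk]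
        rw [hjcast, add_assoc, ← Nat.cast_add, ← tpre_succ L τ hjk]

lemma based_rep [NeZero n] [NeZero k] (L : Fin k → ℕ) (hsum : ∑ i, L i = n)
    {S : Finset (ZMod n)} {x : ZMod n} {σ : Equiv.Perm (Fin k)}
    (hS : S ⊆ tonnDelta n k L x σ) {p : ZMod n} (hp : p ∈ S) :
    ∃ τ : Equiv.Perm (Fin k), S ⊆ tonnDelta n k L p τ := by
  have hpΔ := hS hp
  rw [tonnDelta_eq] at hpΔ
  simp only [Finset.mem_image, Finset.mem_univ, true_and] at hpΔ
  obtain ⟨u, hu⟩ := hpΔ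
  obtain ⟨τ', _, heq⟩ := delta_rot L hsum x σ u.val (le_of_lt u.isLt)
  rw [hu] at heq
  exact ⟨τ', heq ▸ hS⟩

end Rot

section Struct

variable {n k : ℕ}

lemma rep_struct [NeZero n] [NeZero k] (L : Fin k → ℕ) (hL : ∀ i, 0 < L i)
    (hsum : ∑ i, L i = n) (hgen : TonnGeneric k L)
    {S : Finset (ZMod n)} {p : ZMod n} {τ : Equiv.Perm (Fin k)}
    (hp : p ∈ S) (hS : S ⊆ tonnDelta n k L p τ) :
    (∀ q ∈ S, (∑ i ∈ tblock L S q, L i) = tgap S q)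
    ∧ (∀ q ∈ S, ∀ q' ∈ S, q ≠ q' → Disjoint (tblock L S q) (tblock L S q'))
    ∧ (S.biUnion (tblock L S) = Finset.univ)
    ∧ ∃ jstar : ℕ, 1 ≤ jstar ∧ jstar ≤ k ∧
        tgap S p = tpre L τ jstar ∧
        tblock L S p = Finset.image τ (Finset.univ.filter (fun i : Fin k => (i : ℕ) < jstar)) ∧
        (∀ q ∈ S, q ≠ p → ∃ j : ℕ, jstar ≤ j ∧ j < k ∧ q = p + ((tpre L τ j : ℕ) : ZMod n)) := by
  classical
  have hn : 0 < n := Nat.pos_of_ne_zero (NeZero.ne n)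
  have hk : 0 < k := Nat.pos_of_ne_zero (NeZero.ne k)
  set f : ℕ → ZMod n := fun j => p + ((tpre L τ j : ℕ) : ZMod n) with hf
  have hf0 : f 0 = p := by simp [hf, tpre_zero]
  set J : Finset ℕ := (Finset.range k).filter (fun j => f j ∈ S) with hJ
  have h0J : (0 : ℕ) ∈ J := by
    rw [hJ, Finset.mem_filter, Finset.mem_range, hf0]
    exact ⟨hk, hp⟩
  have hJk : ∀ j ∈ J, j < k := fun j hj => Finset.mem_range.mp (Finset.mem_filter.mp hj).1
  have hJS : ∀ j ∈ J, f j ∈ S := fun j hj => (Finset.mem_filter.mp hj).2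
  have htlt : ∀ j, j < k → tpre L τ j < n := by
    intro j hj
    rw [← hsum, ← tpre_k L τ]
    exact tpre_strict L hL τ hj le_rfl
  have htle : ∀ j, j ≤ k → tpre L τ j ≤ n := by
    intro j hj
    rw [← hsum, ← tpre_k L τ]
    exact tpre_mono_le L τ hj
  have hcastinj : ∀ a b : ℕ, a < n → b < n → ((a : ZMod n) = (b : ZMod n)) → a = b := by
    intro a b ha hb h
    have := congrArg ZMod.val h
    rwa [ZMod.val_cast_of_lt ha, ZMod.val_cast_of_lt hb] at this
  have hinj : ∀ j j' : ℕ, j < k → j' < k → f j = f j' → j = j' := by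
    intro j j' hj hj' h
    rw [hf] at h
    have h2 : ((tpre L τ j : ℕ) : ZMod n) = ((tpre L τ j' : ℕ) : ZMod n) := by
      have := add_left_cancel h
      exact this
    have := hcastinj _ _ (htlt j hj) (htlt j' hj') h2
    rcases Nat.lt_trichotomy j j' with h3 | h3 | h3
    · exact absurd this (Nat.ne_of_lt (tpre_strict L hL τ h3 (le_of_lt hj')))
    · exact h3
    · exact absurd this.symm (Nat.ne_of_lt (tpre_strict L hL τ h3 (le_of_lt hj)))
  have hSrep : ∀ q ∈ S, ∃ j, j ∈ J ∧ q = f j := by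
    intro q hq
    have hqΔ := hS hq
    rw [tonnDelta_eq] at hqΔ
    simp only [Finset.mem_image, Finset.mem_univ, true_and] at hqΔ
    obtain ⟨u, hu⟩ := hqΔ
    refine ⟨u.val, ?_, hu.symm⟩
    rw [hJ, Finset.mem_filter, Finset.mem_range]
    exact ⟨u.isLt, by rw [hf]; simpa [hu] using hq⟩
  -- the next index function
  set nxtJ : ℕ → ℕ := fun j => (insert k (J.filter (fun a => j < a))).min'
    (Finset.insert_nonempty _ _) with hnxtJ
  have hnxt_mem : ∀ j, nxtJ j ∈ insert k (J.filter (fun a => j < a)) := by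
    intro j; exact Finset.min'_mem _ _
  have hnxt_le_k : ∀ j, nxtJ j ≤ k := by
    intro j; exact Finset.min'_le _ _ (Finset.mem_insert_self _ _)
  have hnxt_gt : ∀ j, j < k → j < nxtJ j := by
    intro j hj
    rcases Finset.mem_insert.mp (hnxt_mem j) with h | h
    · omega
    · exact (Finset.mem_filter.mp h).2
  have hnxt_min : ∀ j a, a ∈ J → j < a → nxtJ j ≤ a := by
    intro j a ha hja
    exact Finset.min'_le _ _ (Finset.mem_insert_of_mem (Finset.mem_filter.mpr ⟨ha, hja⟩))
  -- distance formulas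
  have hdist_up : ∀ j j' : ℕ, j < j' → j' < k → tdist (f j) (f j') = tpre L τ j' - tpre L τ j := by
    intro j j' hlt hj'
    have hle : tpre L τ j ≤ tpre L τ j' := tpre_mono_le L τ (le_of_lt hlt)
    have : f j' - f j = (((tpre L τ j' - tpre L τ j : ℕ)) : ZMod n) := by
      rw [hf, Nat.cast_sub hle]
      ring
    rw [tdist, this, ZMod.val_cast_of_lt (by have := htlt j' hj'; omega)]
  have hdist_down : ∀ j j' : ℕ, j' < j → j < k →
      tdist (f j) (f j') = n - tpre L τ j + tpre L τ j' := by
    intro j j' hlt hj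
    have hle : tpre L τ j ≤ n := htle j (le_of_lt (by omega))
    have hstrict : tpre L τ j' < tpre L τ j := tpre_strict L hL τ hlt (le_of_lt hj)
    have : f j' - f j = (((n - tpre L τ j + tpre L τ j' : ℕ)) : ZMod n) := by
      rw [hf, Nat.cast_add, Nat.cast_sub hle, ZMod.natCast_self]
      ring
    rw [tdist, this, ZMod.val_cast_of_lt (by omega)]
  -- gap formula
  have hgapf : ∀ j ∈ J, tgap S (f j) = tpre L τ (nxtJ j) - tpre L τ j := by
    intro j hj
    have hjk' : j < k := hJk j hj
    apply le_antisymm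
    · rcases Finset.mem_insert.mp (hnxt_mem j) with h | h
      · -- nxtJ j = k
        rw [h, tpre_k, hsum]
        by_cases hj0 : j = 0
        · subst hj0
          rw [tpre_zero, Nat.sub_zero]
          exact tgap_le_n S (f 0)
        · have h0lt : (0:ℕ) < j := Nat.pos_of_ne_zero hj0
          have hd := hdist_down j 0 h0lt hjk'
          rw [tpre_zero, Nat.add_zero] at hd
          have hne : f 0 ≠ f j := fun hc => hj0 (hinj 0 j hk hjk' hc).symm
          have hgd := tgap_le_dist (hJS 0 h0J) hne
          omega
      · obtain ⟨hmem, hlt⟩ := Finset.mem_filter.mp h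
        have hne : f (nxtJ j) ≠ f j := fun hc => (Nat.ne_of_lt hlt).symm (hinj _ _ (hJk _ hmem) hjk' hc)
        have := tgap_le_dist (hJS _ hmem) hne
        rw [hdist_up j (nxtJ j) hlt (hJk _ hmem)] at this
        exact this
    · apply ge_tgap_iff
      · have := htle (nxtJ j) (hnxt_le_k j); omega
      · intro q hq hqne
        obtain ⟨j'', hj'', rfl⟩ := hSrep q hq
        have hne : j'' ≠ j := fun hc => hqne (by rw [hc])
        rcases Nat.lt_or_ge j j'' with h3 | h3
        · rw [hdist_up j j'' h3 (hJk _ hj'')]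
          have h4 := hnxt_min j j'' hj'' h3
          have := tpre_mono_le L τ h4
          omega
        · have h3' : j'' < j := by omega
          rw [hdist_down j j'' h3' hjk']
          have := htle (nxtJ j) (hnxt_le_k j)
          omega
  -- block sums
  have hblksum : ∀ j, j < k →
      (∑ i ∈ Finset.image τ (Finset.univ.filter
        (fun i : Fin k => j ≤ (i : ℕ) ∧ (i : ℕ) < nxtJ j)), L i)
      = tpre L τ (nxtJ j) - tpre L τ j := by
    intro j hj
    rw [Finset.sum_image (fun a _ b _ h => τ.injective h)]
    have hsplit : tpre L τ (nxtJ j) = tpre L τ j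
        + ∑ i ∈ Finset.univ.filter (fun i : Fin k => j ≤ (i : ℕ) ∧ (i : ℕ) < nxtJ j), L (τ i) := by
      rw [tpre, tpre, ← Finset.sum_union]
      · congr 1
        ext i
        simp only [Finset.mem_union, Finset.mem_filter, Finset.mem_univ, true_and]
        have := hnxt_gt j hj
        omega
      · rw [Finset.disjoint_left]
        intro a ha ha'
        simp only [Finset.mem_filter, Finset.mem_univ, true_and] at ha ha'
        omega
    omega
  have hblockeq : ∀ j ∈ J, tblock L S (f j) = Finset.image τ (Finset.univ.filter
      (fun i : Fin k => j ≤ (i : ℕ) ∧ (i : ℕ) < nxtJ j)) := by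
    intro j hj
    exact tblock_eq L hgen (by rw [hblksum j (hJk j hj), ← hgapf j hj])
  have hsum' : ∀ q ∈ S, (∑ i ∈ tblock L S q, L i) = tgap S q := by
    intro q hq
    obtain ⟨j, hj, rfl⟩ := hSrep q hq
    rw [hblockeq j hj, hblksum j (hJk j hj), hgapf j hj]
  have hdisj : ∀ q ∈ S, ∀ q' ∈ S, q ≠ q' → Disjoint (tblock L S q) (tblock L S q') := by
    have key : ∀ j ∈ J, ∀ j' ∈ J, j < j' →
        Disjoint (tblock L S (f j)) (tblock L S (f j')) := by
      intro j hj j' hj' hlt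
      rw [hblockeq j hj, hblockeq j' hj', Finset.disjoint_left]
      intro i hi hi'
      simp only [Finset.mem_image, Finset.mem_filter, Finset.mem_univ, true_and] at hi hi'
      obtain ⟨a, ⟨ha1, ha2⟩, rfl⟩ := hi
      obtain ⟨b, ⟨hb1, hb2⟩, hab⟩ := hi'
      have : b = a := τ.injective hab
      subst this
      have := hnxt_min j j' hj' hlt
      omega
    intro q hq q' hq' hne
    obtain ⟨j, hj, rfl⟩ := hSrep q hq
    obtain ⟨j', hj', rfl⟩ := hSrep q' hq'
    have hjj' : j ≠ j' := fun hc => hne (by rw [hc])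
    rcases Nat.lt_or_ge j j' with h | h
    · exact key j hj j' hj' h
    · exact (key j' hj' j hj (by omega)).symm
  have hcover : S.biUnion (tblock L S) = Finset.univ := by
    apply Finset.eq_univ_of_forall
    intro i
    rw [Finset.mem_biUnion]
    set a : ℕ := (τ.symm i).val with ha
    have haK : a < k := (τ.symm i).isLt
    have hne : (J.filter (fun j => j ≤ a)).Nonempty := ⟨0, Finset.mem_filter.mpr ⟨h0J, Nat.zero_le a⟩⟩
    set j : ℕ := (J.filter (fun j => j ≤ a)).max' hne with hjdef
    have hjmem : j ∈ J := (Finset.mem_filter.mp (Finset.max'_mem _ hne)).1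
    have hjle : j ≤ a := (Finset.mem_filter.mp (Finset.max'_mem _ hne)).2
    have hanxt : a < nxtJ j := by
      by_contra hcon
      push_neg at hcon
      rcases Finset.mem_insert.mp (hnxt_mem j) with h | h
      · omega
      · obtain ⟨hmem, hlt⟩ := Finset.mem_filter.mp h
        have : nxtJ j ≤ j := Finset.le_max' _ _ (Finset.mem_filter.mpr ⟨hmem, by omega⟩)
        omega
    refine ⟨f j, hJS j hjmem, ?_⟩
    rw [hblockeq j hjmem]
    rw [Finset.mem_image]
    exact ⟨τ.symm i, Finset.mem_filter.mpr ⟨Finset.mem_univ _, ⟨hjle, hanxt⟩⟩, τ.apply_symm_apply i⟩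
  refine ⟨hsum', hdisj, hcover, nxtJ 0, hnxt_gt 0 hk, hnxt_le_k 0, ?_, ?_, ?_⟩
  · rw [← hf0, hgapf 0 h0J, tpre_zero, Nat.sub_zero]
  · rw [← hf0, hblockeq 0 h0J]
    congr 1
    ext i
    simp
  · intro q hq hqne
    obtain ⟨j, hj, rfl⟩ := hSrep q hq
    have hj0 : j ≠ 0 := fun hc => hqne (by rw [hc, hf0])
    exact ⟨j, hnxt_min 0 j hj (Nat.pos_of_ne_zero hj0), hJk j hj, rfl⟩

end Struct

section Flip

variable {n k : ℕ}

lemma face_blocks [NeZero n] [NeZero k] (L : Fin k → ℕ) (hL : ∀ i, 0 < L i)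
    (hsum : ∑ i, L i = n) (hgen : TonnGeneric k L)
    {S : Finset (ZMod n)} (hface : IsTonnFace n k L S) :
    (∀ q ∈ S, (∑ i ∈ tblock L S q, L i) = tgap S q)
    ∧ (∀ q ∈ S, ∀ q' ∈ S, q ≠ q' → Disjoint (tblock L S q) (tblock L S q'))
    ∧ S.biUnion (tblock L S) = Finset.univ := by
  obtain ⟨⟨p, hp⟩, x, σ, hsub⟩ := hface
  obtain ⟨τ, hτ⟩ := based_rep L hsum hsub hp
  obtain ⟨a, b, c, -⟩ := rep_struct L hL hsum hgen hp hτ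
  exact ⟨a, b, c⟩

/-- the pivot point of a face: the point whose gap-block contains the index `0`. -/
noncomputable def tpivot [NeZero k] (L : Fin k → ℕ) (S : Finset (ZMod n)) : ZMod n :=
  if h : ∃ p ∈ S, (0 : Fin k) ∈ tblock L S p then h.choose else 0

lemma tpivot_spec [NeZero n] [NeZero k] (L : Fin k → ℕ) (hL : ∀ i, 0 < L i)
    (hsum : ∑ i, L i = n) (hgen : TonnGeneric k L)
    {S : Finset (ZMod n)} (hface : IsTonnFace n k L S) :
    tpivot L S ∈ S ∧ (0 : Fin k) ∈ tblock L S (tpivot L S) ∧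
      (∀ p ∈ S, (0 : Fin k) ∈ tblock L S p → p = tpivot L S) := by
  obtain ⟨hsums, hdisj, hcover⟩ := face_blocks L hL hsum hgen hface
  have hex : ∃ p ∈ S, (0 : Fin k) ∈ tblock L S p := by
    have h0 : (0 : Fin k) ∈ S.biUnion (tblock L S) := by rw [hcover]; exact Finset.mem_univ _
    simpa using Finset.mem_biUnion.mp h0
  have hmem : tpivot L S ∈ S ∧ (0 : Fin k) ∈ tblock L S (tpivot L S) := by
    rw [tpivot, dif_pos hex]
    exact hex.choose_spec
  refine ⟨hmem.1, hmem.2, ?_⟩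
  intro p hp h0p
  by_contra hne
  have := hdisj p hp (tpivot L S) hmem.1 hne
  exact (Finset.disjoint_left.mp this h0p) hmem.2

lemma L0_lt_n [NeZero k] {L : Fin k → ℕ} (hk2 : 2 ≤ k) (hL : ∀ i, 0 < L i)
    (hsum : ∑ i, L i = n) : L 0 < n := by
  have h01 : (0 : Fin k) ≠ 1 := by
    intro hc
    have h0 : ((0 : Fin k) : ℕ) = 0 := Fin.val_zero k
    have h1 : ((1 : Fin k) : ℕ) = 1 := by rw [Fin.val_one']; exact Nat.mod_eq_of_lt (by omega)
    rw [hc, h1] at h0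
    omega
  have hsub : L 0 + L 1 ≤ ∑ i, L i := by
    rw [← Finset.sum_pair h01]
    exact Finset.sum_le_sum_of_subset (Finset.subset_univ _)
  have := hL 1
  omega

lemma insert_face [NeZero n] [NeZero k] (L : Fin k → ℕ) (hk2 : 2 ≤ k) (hL : ∀ i, 0 < L i)
    (hsum : ∑ i, L i = n) (hgen : TonnGeneric k L)
    {S : Finset (ZMod n)} (hface : IsTonnFace n k L S)
    {p : ZMod n} (hp : p ∈ S) (h0 : (0 : Fin k) ∈ tblock L S p) :
    IsTonnFace n k L (insert (p + ((L 0 : ℕ) : ZMod n)) S) := by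
  obtain ⟨hne, x, σ, hsub⟩ := hface
  obtain ⟨τ, hτ⟩ := based_rep L hsum hsub hp
  obtain ⟨-, -, -, jstar, hj1, hjk, hgapP, hblockP, hrest⟩ := rep_struct L hL hsum hgen hp hτ
  rw [hblockP] at h0
  obtain ⟨i₀, hi₀mem, hi₀⟩ := Finset.mem_image.mp h0
  have hi₀lt : (i₀ : ℕ) < jstar := (Finset.mem_filter.mp hi₀mem).2
  set τ' : Equiv.Perm (Fin k) := (Equiv.swap (0 : Fin k) i₀).trans τ with hτ'def
  have hτ'app : ∀ i, τ' i = τ (Equiv.swap (0 : Fin k) i₀ i) := fun i => rfl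
  refine ⟨Finset.insert_nonempty _ _, p, τ', ?_⟩
  have hval0 : ((0 : Fin k) : ℕ) = 0 := Fin.val_zero k
  have hpre_eq : ∀ t : ℕ, (i₀ : ℕ) < t → tpre L τ' t = tpre L τ t := by
    intro t ht
    rw [tpre, tpre]
    apply Finset.sum_equiv (Equiv.swap (0 : Fin k) i₀)
    · intro i
      simp only [Finset.mem_filter, Finset.mem_univ, true_and]
      by_cases hi : i = 0
      · subst hi
        rw [Equiv.swap_apply_left, hval0]
        omega
      · by_cases hi' : i = i₀
        · subst hi'
          rw [Equiv.swap_apply_right, hval0]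
          omega
        · rw [Equiv.swap_apply_of_ne_of_ne hi hi']
    · intro i _
      rw [hτ'app]
  have hpre1 : tpre L τ' 1 = L 0 := by
    rw [tpre_succ L τ' (by omega : 0 < k), tpre_zero, zero_add]
    have h00 : (⟨0, by omega⟩ : Fin k) = (0 : Fin k) := by
      ext; simp [Fin.val_zero]
    rw [h00, hτ'app, Equiv.swap_apply_left, hi₀]
  intro y hy
  rw [tonnDelta_eq]
  simp only [Finset.mem_image, Finset.mem_univ, true_and]
  rcases Finset.mem_insert.mp hy with rfl | hyS
  · refine ⟨⟨1, by omega⟩, ?_⟩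
    rw [show ((⟨1, by omega⟩ : Fin k) : ℕ) = 1 from rfl, hpre1]
  · by_cases hyp : y = p
    · subst hyp
      refine ⟨⟨0, by omega⟩, ?_⟩
      rw [show ((⟨0, by omega⟩ : Fin k) : ℕ) = 0 from rfl, tpre_zero, Nat.cast_zero, add_zero]
    · obtain ⟨j, hjge, hjlt, hrep⟩ := hrest y hyS hyp
      refine ⟨⟨j, hjlt⟩, ?_⟩
      rw [show ((⟨j, hjlt⟩ : Fin k) : ℕ) = j from rfl, hpre_eq j (by omega), ← hrep]

/-- the matching involution -/
noncomputable def tflip [NeZero k] (L : Fin k → ℕ) (S : Finset (ZMod n)) : Finset (ZMod n) :=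
  if tblock L S (tpivot L S) = {0} then S.erase (tpivot L S + ((L 0 : ℕ) : ZMod n))
  else insert (tpivot L S + ((L 0 : ℕ) : ZMod n)) S

end Flip


section FlipSpec

variable {n k : ℕ}

lemma tflip_spec [NeZero n] [NeZero k] (L : Fin k → ℕ) (hk2 : 2 ≤ k) (hL : ∀ i, 0 < L i)
    (hsum : ∑ i, L i = n) (hgen : TonnGeneric k L)
    {S : Finset (ZMod n)} (hface : IsTonnFace n k L S) :
    IsTonnFace n k L (tflip L S) ∧ tflip L (tflip L S) = S ∧
      (S.card = (tflip L S).card + 1 ∨ (tflip L S).card = S.card + 1) := by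
  classical
  obtain ⟨hpivS, hpiv0, hpivU⟩ := tpivot_spec L hL hsum hgen hface
  obtain ⟨hsums, hdisj, hcover⟩ := face_blocks L hL hsum hgen hface
  set p : ZMod n := tpivot L S with hpdef
  set q : ZMod n := p + ((L 0 : ℕ) : ZMod n) with hq
  have hL0n : L 0 < n := L0_lt_n hk2 hL hsum
  have hL0pos : 0 < L 0 := hL 0
  have hqnep : q ≠ p := by
    intro hc
    rw [hq] at hc
    nth_rewrite 2 [← add_zero p] at hc
    have h2 := add_left_cancel hc
    have := congrArg ZMod.val h2
    rw [ZMod.val_cast_of_lt hL0n, ZMod.val_zero] at this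
    omega
  have hdistpq : tdist p q = L 0 := by rw [hq]; exact tdist_add_cast p hL0n
  by_cases hcase : tblock L S p = {0}
  · -- MERGE case: remove the point q = p + L 0 from S
    have hgapP : tgap S p = L 0 := by
      have h := hsums p hpivS
      rw [hcase, Finset.sum_singleton] at h
      exact h.symm
    have hqS : q ∈ S := by
      rcases tgap_mem S p with h | ⟨r, hrS, hrne, hr⟩
      · omega
      · have : r = q := by
          rw [hq, ← hgapP, ← hr, add_tdist]
        exact this ▸ hrS
    set S' : Finset (ZMod n) := S.erase q with hS'
    have hpS' : p ∈ S' := Finset.mem_erase.mpr ⟨fun hc => hqnep hc.symm, hpivS⟩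
    obtain ⟨hSne, x, σ, hsub⟩ := hface
    have hfaceS' : IsTonnFace n k L S' := ⟨⟨p, hpS'⟩, x, σ, (Finset.erase_subset _ _).trans hsub⟩
    have hdisjpq := hdisj p hpivS q hqS (fun hc => hqnep hc.symm)
    have huni : (∑ i ∈ tblock L S p ∪ tblock L S q, L i) = L 0 + tgap S q := by
      rw [Finset.sum_union hdisjpq, hsums p hpivS, hsums q hqS, hgapP]
    have hle_n : L 0 + tgap S q ≤ n := by
      have h1 : (∑ i ∈ tblock L S p ∪ tblock L S q, L i) ≤ ∑ i, L i :=
        Finset.sum_le_sum_of_subset (Finset.subset_univ _)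
      omega
    -- distances from q
    have hdq : ∀ r ∈ S, r ≠ p → r ≠ q → tdist q r = tdist p r - L 0 ∧ L 0 < tdist p r := by
      intro r hrS hrp hrq
      have h1 : tgap S p ≤ tdist p r := tgap_le_dist hrS hrp
      have h1' : tdist p r ≠ L 0 := by
        intro hc
        exact hrq (by rw [← add_tdist p r, hc, ← hq])
      have hgt : L 0 < tdist p r := by omega
      have hrp2 : r - p = ((tdist p r : ℕ) : ZMod n) := by
        rw [tdist, ZMod.natCast_val, ZMod.cast_id]
      have hcast : r - q = (((tdist p r - L 0 : ℕ)) : ZMod n) := by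
        rw [Nat.cast_sub (le_of_lt hgt), ← hrp2, hq]
        ring
      have hlt : tdist p r - L 0 < n := by
        have := tdist_lt p r
        omega
      constructor
      · rw [tdist, hcast, ZMod.val_cast_of_lt hlt]
      · exact hgt
    have hlow : ∀ r ∈ S', r ≠ p → L 0 + tgap S q ≤ tdist p r := by
      intro r hrS' hrp
      have hrq : r ≠ q := (Finset.mem_erase.mp hrS').1
      have hrS : r ∈ S := (Finset.mem_erase.mp hrS').2
      obtain ⟨hd, hgt⟩ := hdq r hrS hrp hrq
      have h2 : tgap S q ≤ tdist q r := tgap_le_dist hrS hrq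
      omega
    have hgapS'ge : L 0 + tgap S q ≤ tgap S' p := ge_tgap_iff hle_n hlow
    have hgapS'le : tgap S' p ≤ L 0 + tgap S q := by
      by_cases hthird : ∃ r ∈ S, r ≠ p ∧ r ≠ q
      · obtain ⟨r3, hr3S, hr3p, hr3q⟩ := hthird
        have hstrict : L 0 + tgap S q < n := by
          have hr3sum := hsums r3 hr3S
          have hr3pos := tgap_pos S r3
          have hd1 := hdisj p hpivS r3 hr3S (fun hc => hr3p hc.symm)
          have hd2 := hdisj q hqS r3 hr3S (fun hc => hr3q hc.symm)
          have hdu : Disjoint (tblock L S p ∪ tblock L S q) (tblock L S r3) :=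
            Finset.disjoint_union_left.mpr ⟨hd1, hd2⟩
          have hbig : (∑ i ∈ (tblock L S p ∪ tblock L S q) ∪ tblock L S r3, L i) ≤ ∑ i, L i :=
            Finset.sum_le_sum_of_subset (Finset.subset_univ _)
          rw [Finset.sum_union hdu, huni, hr3sum] at hbig
          omega
        rcases tgap_mem S q with h | ⟨w, hwS, hwq, hw⟩
        · have h2 : tgap S q ≤ tdist q r3 := tgap_le_dist hr3S hr3q
          have := tdist_lt q r3
          omega
        · have hwp : w ≠ p := by
            intro hc
            rw [hc] at hw
            have hdqp : tdist q p = n - L 0 := by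
              have hcast : p - q = (((n - L 0 : ℕ)) : ZMod n) := by
                rw [Nat.cast_sub (le_of_lt hL0n), ZMod.natCast_self, hq]
                ring
              rw [tdist, hcast, ZMod.val_cast_of_lt (by omega)]
            obtain ⟨hd, hgt⟩ := hdq r3 hr3S hr3p hr3q
            have h2 : tgap S q ≤ tdist q r3 := tgap_le_dist hr3S hr3q
            have h4 := tdist_lt p r3
            omega
          have hwS' : w ∈ S' := Finset.mem_erase.mpr ⟨hwq, hwS⟩
          have hdist_pw : tdist p w = L 0 + tgap S q := by
            have h2 : w - q = ((tgap S q : ℕ) : ZMod n) := by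
              rw [← hw, tdist, ZMod.natCast_val, ZMod.cast_id]
            have hcast : w - p = (((L 0 + tgap S q : ℕ)) : ZMod n) := by
              rw [Nat.cast_add, ← h2, hq]
              ring
            rw [tdist, hcast, ZMod.val_cast_of_lt hstrict]
          calc tgap S' p ≤ tdist p w := tgap_le_dist hwS' hwp
            _ = L 0 + tgap S q := hdist_pw
      · push_neg at hthird
        have hcov2 : Finset.univ ⊆ tblock L S p ∪ tblock L S q := by
          rw [← hcover]
          intro i hi
          obtain ⟨r, hrS, hir⟩ := Finset.mem_biUnion.mp hi
          by_cases hrp : r = p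
          · exact Finset.mem_union_left _ (hrp ▸ hir)
          · have hh := hthird r hrS hrp
            exact Finset.mem_union_right _ (hh ▸ hir)
        have hbig : (∑ i, L i) ≤ ∑ i ∈ tblock L S p ∪ tblock L S q, L i :=
          Finset.sum_le_sum_of_subset hcov2
        have := tgap_le_n S' p
        omega
    have hgapS' : tgap S' p = L 0 + tgap S q := le_antisymm hgapS'le hgapS'ge
    have hblkS' : tblock L S' p = tblock L S p ∪ tblock L S q :=
      tblock_eq L hgen (by rw [huni, hgapS'])
    have h0S' : (0 : Fin k) ∈ tblock L S' p := by
      rw [hblkS']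
      exact Finset.mem_union_left _ (by rw [hcase]; exact Finset.mem_singleton_self 0)
    have hblkne : tblock L S' p ≠ {0} := by
      obtain ⟨i, hi⟩ : (tblock L S q).Nonempty := by
        by_contra hcon
        rw [Finset.not_nonempty_iff_eq_empty] at hcon
        have h := hsums q hqS
        rw [hcon, Finset.sum_empty] at h
        have := tgap_pos S q
        omega
      have hi0 : i ≠ 0 := by
        intro hc
        subst hc
        exact (Finset.disjoint_right.mp hdisjpq hi)
          (by rw [hcase]; exact Finset.mem_singleton_self 0)
      intro hc
      have hmem : i ∈ tblock L S' p := by rw [hblkS']; exact Finset.mem_union_right _ hi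
      rw [hc, Finset.mem_singleton] at hmem
      exact hi0 hmem
    obtain ⟨hpivS'2, hpiv0', hpivU'⟩ := tpivot_spec L hL hsum hgen hfaceS'
    have hpiv' : tpivot L S' = p := (hpivU' p hpS' h0S').symm
    have hflipS : tflip L S = S' := by
      unfold tflip
      rw [← hpdef, if_pos hcase, ← hq, hS']
    have hflipS' : tflip L S' = S := by
      unfold tflip
      rw [hpiv', if_neg hblkne, ← hq, hS']
      exact Finset.insert_erase hqS
    refine ⟨by rw [hflipS]; exact hfaceS', by rw [hflipS, hflipS'], ?_⟩
    left
    rw [hflipS, hS', Finset.card_erase_of_mem hqS]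
    have : 0 < S.card := Finset.card_pos.mpr ⟨q, hqS⟩
    omega
  · -- SPLIT case: insert the point q = p + L 0 into S
    have hsump := hsums p hpivS
    have hgapgt : L 0 < tgap S p := by
      obtain ⟨i, hiB, hine⟩ : ∃ i ∈ tblock L S p, i ≠ 0 := by
        by_contra hcon
        push_neg at hcon
        exact hcase (Finset.eq_singleton_iff_unique_mem.mpr ⟨hpiv0, fun i hi => hcon i hi⟩)
      have hpair : L 0 + L i ≤ ∑ j ∈ tblock L S p, L j := by
        rw [← Finset.sum_pair (Ne.symm hine)]
        apply Finset.sum_le_sum_of_subset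
        intro a ha
        rcases Finset.mem_insert.mp ha with rfl | ha
        · exact hpiv0
        · exact (Finset.mem_singleton.mp ha) ▸ hiB
      have := hL i
      omega
    have hqnotS : q ∉ S := by
      intro hc
      have := tgap_le_dist hc hqnep
      rw [hdistpq] at this
      omega
    set S' : Finset (ZMod n) := insert q S with hS'
    have hfaceS' : IsTonnFace n k L S' := by
      rw [hS', hq]
      exact insert_face L hk2 hL hsum hgen hface hpivS hpiv0
    have hqS' : q ∈ S' := by rw [hS']; exact Finset.mem_insert_self _ _
    have hgap' : tgap S' p = L 0 := by
      apply le_antisymm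
      · have := tgap_le_dist hqS' hqnep
        rw [hdistpq] at this
        exact this
      · apply ge_tgap_iff (le_of_lt hL0n)
        intro r hrS' hrp
        rw [hS'] at hrS'
        rcases Finset.mem_insert.mp hrS' with rfl | hrS
        · rw [hdistpq]
        · have := tgap_le_dist hrS hrp
          omega
    have hblk' : tblock L S' p = {0} := tblock_eq L hgen (by rw [Finset.sum_singleton, hgap'])
    obtain ⟨hpivS'2, hpiv0', hpivU'⟩ := tpivot_spec L hL hsum hgen hfaceS'
    have hpS' : p ∈ S' := by rw [hS']; exact Finset.mem_insert_of_mem hpivS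
    have hpiv' : tpivot L S' = p :=
      (hpivU' p hpS' (by rw [hblk']; exact Finset.mem_singleton_self 0)).symm
    have hflipS : tflip L S = S' := by
      unfold tflip
      rw [← hpdef, if_neg hcase, ← hq, hS']
    have hflipS' : tflip L S' = S := by
      unfold tflip
      rw [hpiv', if_pos hblk', ← hq, hS']
      exact Finset.erase_insert hqnotS
    refine ⟨by rw [hflipS]; exact hfaceS', by rw [hflipS, hflipS'], ?_⟩
    right
    rw [hflipS, hS', Finset.card_insert_of_notMem hqnotS]

end FlipSpec

theorem stmt_2 (n k : ℕ) (hn : 1 ≤ n) (hk : 2 ≤ k)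
    (L : Fin k → ℕ) (hL : ∀ i, 0 < L i) (hsum : ∑ i, L i = n)
    (hgen : TonnGeneric k L) :
    ∑ m ∈ Finset.Icc 1 k, (-1 : ℤ) ^ (m - 1) *
      (Set.ncard {S : Finset (ZMod n) | IsTonnFace n k L S ∧ S.card = m} : ℤ) = 0 := by
  classical
  haveI : NeZero n := ⟨by omega⟩
  haveI : NeZero k := ⟨by omega⟩
  set Ω : Finset (Finset (ZMod n)) := Finset.univ.filter (fun S => IsTonnFace n k L S) with hΩ
  have hcard_le : ∀ S : Finset (ZMod n), IsTonnFace n k L S → S.card ≤ k := by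
    rintro S ⟨-, x, σ, hsub⟩
    calc S.card ≤ (tonnDelta n k L x σ).card := Finset.card_le_card hsub
      _ ≤ (Finset.univ : Finset (Fin k)).card := Finset.card_image_le
      _ = k := by simp
  have hncard : ∀ m : ℕ, (Set.ncard {S : Finset (ZMod n) | IsTonnFace n k L S ∧ S.card = m} : ℤ)
      = ((Ω.filter (fun S => S.card = m)).card : ℤ) := by
    intro m
    have hset : {S : Finset (ZMod n) | IsTonnFace n k L S ∧ S.card = m}
        = ↑(Ω.filter (fun S => S.card = m)) := by
      ext S
      simp [hΩ]
    rw [hset, Set.ncard_coe_finset]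
  have hrw1 : (∑ m ∈ Finset.Icc 1 k, (-1 : ℤ) ^ (m - 1) *
        (Set.ncard {S : Finset (ZMod n) | IsTonnFace n k L S ∧ S.card = m} : ℤ))
      = ∑ m ∈ Finset.Icc 1 k, (-1:ℤ)^(m-1) * ((Ω.filter (fun S => S.card = m)).card : ℤ) :=
    Finset.sum_congr rfl (fun m _ => by rw [hncard m])
  have hmaps : ∀ S ∈ Ω, S.card ∈ Finset.Icc 1 k := by
    intro S hS
    have hface := (Finset.mem_filter.mp hS).2
    rw [Finset.mem_Icc]
    exact ⟨Finset.card_pos.mpr hface.1, hcard_le S hface⟩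
  have hfiber : ∀ m : ℕ, (∑ S ∈ Ω.filter (fun S => S.card = m), (-1:ℤ)^(S.card - 1))
      = (-1:ℤ)^(m-1) * ((Ω.filter (fun S => S.card = m)).card : ℤ) := by
    intro m
    rw [Finset.sum_congr rfl (fun S hS =>
      by rw [(Finset.mem_filter.mp hS).2] : ∀ S ∈ Ω.filter (fun S => S.card = m),
        (-1:ℤ)^(S.card - 1) = (-1:ℤ)^(m-1))]
    rw [Finset.sum_const, nsmul_eq_mul, mul_comm]
  have hsplit : (∑ m ∈ Finset.Icc 1 k, (-1:ℤ)^(m-1) * ((Ω.filter (fun S => S.card = m)).card : ℤ))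
      = ∑ S ∈ Ω, (-1:ℤ)^(S.card - 1) := by
    rw [← Finset.sum_fiberwise_of_maps_to hmaps (fun S => (-1:ℤ)^(S.card - 1))]
    exact Finset.sum_congr rfl (fun m _ => (hfiber m).symm)
  have key : ∀ a : ℕ, 1 ≤ a → (-1:ℤ)^((a+1)-1) + (-1:ℤ)^(a-1) = 0 := by
    intro a ha
    obtain ⟨b, rfl⟩ : ∃ b, a = b + 1 := ⟨a - 1, by omega⟩
    simp [pow_succ]
  have hmain : (∑ S ∈ Ω, (-1:ℤ)^(S.card - 1)) = 0 := by
    apply Finset.sum_involution (fun S _ => tflip L S)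
    · intro S hS
      have hface : IsTonnFace n k L S := (Finset.mem_filter.mp hS).2
      obtain ⟨h1, h2, h3⟩ := tflip_spec L hk hL hsum hgen hface
      have hp1 : 1 ≤ S.card := Finset.card_pos.mpr hface.1
      have hp2 : 1 ≤ (tflip L S).card := Finset.card_pos.mpr h1.1
      rcases h3 with h | h
      · rw [h]
        exact key _ hp2
      · rw [h, add_comm]
        exact key _ hp1
    · intro S hS _
      have hface : IsTonnFace n k L S := (Finset.mem_filter.mp hS).2
      obtain ⟨-, -, h3⟩ := tflip_spec L hk hL hsum hgen hface
      intro hc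
      rw [hc] at h3
      omega
    · intro S hS
      have hface : IsTonnFace n k L S := (Finset.mem_filter.mp hS).2
      obtain ⟨h1, -, -⟩ := tflip_spec L hk hL hsum hgen hface
      rw [hΩ, Finset.mem_filter]
      exact ⟨Finset.mem_univ _, h1⟩
    · intro S hS
      have hface : IsTonnFace n k L S := (Finset.mem_filter.mp hS).2
      exact (tflip_spec L hk hL hsum hgen hface).2.1
  rw [hrw1, hsplit, hmain]
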